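/- For the Lag system R_p with rules blank·blank → blank, blank·p → p, p·blank → blank (acting on control coordinates of pairs, preserving data coordinates), and any starting string (s₁,blank)(s₂,blank)...(s_{n-1},p)(sₙ,blank) with n ≥ 3: after (n−1)² iterations the memory string is (s₂,blank)...(s_{n-1},blank)(sₙ,p)(s₁,blank), and after n(n−1) iterations the memory string equals the initial string; hence the system is periodic with period n(n−1). -/

import Mathlib

namespace Stmt4

/-- Control symbols: blank or the pulse token `p`. -/
inductive Ctl | blank | p
deriving DecidableEq

/-- The rule set `R_p` on control coordinates. -/
def rc : Ctl → Ctl → Option Ctl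
  | .blank, .blank => some .blank
  | .blank, .p => some .p
  | .p, .blank => some .blank
  | _, _ => none

/-- One Lag iteration with context length 2. -/
def step {α : Type*} (r : Ctl → Ctl → Option Ctl) :
    List (α × Ctl) → Option (List (α × Ctl))
  | (x, a) :: (y, b) :: rest => (r a b).map fun c => (y, b) :: rest ++ [(x, c)]
  | _ => none

/-- `k` iterations of the Lag system. -/
def iterL {α : Type*} (r : Ctl → Ctl → Option Ctl) :
    ℕ → List (α × Ctl) → Option (List (α × Ctl))
  | 0, s => some s
  | k + 1, s => (step r s).bind (iterL r k)

end Stmt4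

namespace Stmt4Aux
open Stmt4

variable {α : Type*}

/-- Map a data list to all-blank pairs. -/
def mb (L : List α) : List (α × Ctl) := L.map fun a => (a, Ctl.blank)

@[simp] lemma mb_nil : mb ([] : List α) = [] := rfl
@[simp] lemma mb_cons (x : α) (L : List α) :
    mb (x :: L) = (x, Ctl.blank) :: mb L := rfl
@[simp] lemma mb_append (L M : List α) : mb (L ++ M) = mb L ++ mb M :=
  List.map_append
@[simp] lemma mb_length (L : List α) : (mb L).length = L.length :=
  List.length_map _

lemma iterL_add (r : Ctl → Ctl → Option Ctl) (a b : ℕ) (s : List (α × Ctl)) :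
    iterL r (a + b) s = (iterL r a s).bind (iterL r b) := by
  induction a generalizing s with
  | zero => simp [iterL]
  | succ a ih =>
      have h1 : a + 1 + b = (a + b) + 1 := by ring
      rw [h1]
      show (step r s).bind (iterL r (a + b)) = ((step r s).bind (iterL r a)).bind (iterL r b)
      rw [Option.bind_assoc]
      exact congrArg _ (funext fun t => ih t)

/-- Blank phase: while the first two controls are blank, the string rotates. -/
lemma phase_blank : ∀ (L : List α) (y : α) (T : List (α × Ctl)),
    iterL rc L.length (mb L ++ (y, Ctl.blank) :: T) =
      some ((y, Ctl.blank) :: (T ++ mb L)) := by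
  intro L
  induction L with
  | nil => intro y T; simp [iterL]
  | cons x L ih =>
      intro y T
      cases L with
      | nil => simp [iterL, step, rc]
      | cons w L' =>
          show (step rc ((x, Ctl.blank) :: (w, Ctl.blank) :: (mb L' ++ (y, Ctl.blank) :: T))).bind
              (iterL rc (w :: L').length) = _
          have hs : step rc ((x, Ctl.blank) :: (w, Ctl.blank) :: (mb L' ++ (y, Ctl.blank) :: T))
              = some (mb (w :: L') ++ (y, Ctl.blank) :: (T ++ [(x, Ctl.blank)])) := by
            simp [step, rc]
          rw [hs, Option.bind_some, ih y (T ++ [(x, Ctl.blank)])]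
          simp

/-- One full cycle, quadruple form. -/
lemma cycleQ (L : List α) (y c d : α) :
    iterL rc (L.length + 2) (mb L ++ (y, Ctl.blank) :: (c, Ctl.p) :: [(d, Ctl.blank)]) =
      some ((d, Ctl.blank) :: (mb L ++ (y, Ctl.p) :: [(c, Ctl.blank)])) := by
  rw [iterL_add rc L.length 2, phase_blank L y ((c, Ctl.p) :: [(d, Ctl.blank)]),
    Option.bind_some]
  show (step rc _).bind _ = _
  have h1 : step rc ((y, Ctl.blank) :: ((c, Ctl.p) :: [(d, Ctl.blank)] ++ mb L))
      = some ((c, Ctl.p) :: (d, Ctl.blank) :: (mb L ++ [(y, Ctl.p)])) := by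
    simp [step, rc]
  rw [h1, Option.bind_some]
  show (step rc _).bind _ = _
  have h2 : step rc ((c, Ctl.p) :: (d, Ctl.blank) :: (mb L ++ [(y, Ctl.p)]))
      = some ((d, Ctl.blank) :: (mb L ++ (y, Ctl.p) :: [(c, Ctl.blank)])) := by
    simp [step, rc]
  rw [h2, Option.bind_some]
  rfl

/-- Flat encoding of a data list. -/
def encF (F : List α) : List (α × Ctl) :=
  F.zip (List.replicate (F.length - 2) Ctl.blank ++ [Ctl.p, Ctl.blank])

lemma zip_replicate_blank (L : List α) : L.zip (List.replicate L.length Ctl.blank) = mb L := by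
  induction L with
  | nil => rfl
  | cons x L ih => simp [List.replicate_succ, ih]

lemma encF_eq (L : List α) (y c d : α) :
    encF (L ++ [y, c, d]) = mb L ++ (y, Ctl.blank) :: (c, Ctl.p) :: [(d, Ctl.blank)] := by
  unfold encF
  have h1 : (L ++ [y, c, d]).length - 2 = L.length + 1 := by simp
  rw [h1, List.replicate_add, List.append_assoc,
    List.zip_append (by simp), zip_replicate_blank]
  rfl

lemma decomp (F : List α) (h : 3 ≤ F.length) : ∃ L y c d, F = L ++ [y, c, d] := by
  rcases hF : F.reverse with _ | ⟨d, R1⟩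
  · rw [List.reverse_eq_nil_iff] at hF; subst hF; simp at h
  rcases R1 with _ | ⟨c, R2⟩
  · have := congrArg List.length hF; simp at this; omega
  rcases R2 with _ | ⟨y, R⟩
  · have := congrArg List.length hF; simp at this; omega
  refine ⟨R.reverse, y, c, d, ?_⟩
  rw [← List.reverse_reverse F, hF]
  simp

/-- One full cycle, flat form: rotate right by one. -/
lemma cycle (F : List α) (h : 3 ≤ F.length) :
    iterL rc (F.length - 1) (encF F) = some (encF (F.rotate (F.length - 1))) := by
  obtain ⟨L, y, c, d, rfl⟩ := decomp F h
  have hlen : (L ++ [y, c, d]).length = L.length + 3 := by simp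
  have hl1 : (L ++ [y, c, d]).length - 1 = L.length + 2 := by simp
  rw [hl1, encF_eq, cycleQ]
  congr 1
  have hA : L ++ [y, c, d] = (L ++ [y, c]) ++ [d] := by simp
  have hrot : (L ++ [y, c, d]).rotate (L.length + 2) = (d :: L) ++ [y, c] := by
    rw [List.rotate_eq_drop_append_take (by simp), hA,
      List.drop_left' (by simp), List.take_left' (by simp)]
    simp
  rw [hrot]
  have hne : (d :: L) ≠ [] := by simp
  have hsplit : (d :: L) ++ [y, c]
      = (d :: L).dropLast ++ [(d :: L).getLast hne, y, c] := by
    conv_lhs => rw [← List.dropLast_append_getLast hne]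
    simp
  rw [hsplit, encF_eq]
  rw [show (d, Ctl.blank) :: (mb L ++ (y, Ctl.p) :: [(c, Ctl.blank)])
      = mb (d :: L) ++ (y, Ctl.p) :: [(c, Ctl.blank)] from rfl]
  conv_lhs => rw [← List.dropLast_append_getLast hne]
  simp

/-- `k` full cycles. -/
lemma cycles (k : ℕ) (F : List α) (h : 3 ≤ F.length) :
    iterL rc (k * (F.length - 1)) (encF F) =
      some (encF (F.rotate (k * (F.length - 1)))) := by
  induction k generalizing F with
  | zero => simp [iterL]
  | succ k ih =>
      have h1 : (k + 1) * (F.length - 1) = (F.length - 1) + k * (F.length - 1) := by ring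
      rw [h1, iterL_add, cycle F h, Option.bind_some]
      have h2 : (F.rotate (F.length - 1)).length = F.length := List.length_rotate _ _
      have h3 := ih (F.rotate (F.length - 1)) (by rw [h2]; exact h)
      rw [h2] at h3
      rw [h3, List.rotate_rotate]

/-- The initial `ofFn` string is the flat encoding. -/
lemma encF_ofFn (n : ℕ) (hn : 3 ≤ n) (t : Fin n → α) :
    List.ofFn (fun i : Fin n => (t i, if i.val = n - 2 then Ctl.p else Ctl.blank)) =
      encF (List.ofFn t) := by
  apply List.ext_getElem
  · simp only [encF, List.length_zip, List.length_ofFn, List.length_append,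
      List.length_replicate, List.length_cons, List.length_nil]
    omega
  · intro i h1 h2
    have hi : i < n := by simpa using h1
    have hlen : (List.ofFn t).length = n := List.length_ofFn
    unfold encF at h2 ⊢
    rw [List.getElem_zip, List.getElem_ofFn, List.getElem_ofFn]
    refine Prod.ext rfl ?_
    simp only
    rcases lt_trichotomy i (n - 2) with hc | hc | hc
    · rw [List.getElem_append_left (by simp [hlen]; omega),
        List.getElem_replicate]
      rw [if_neg (by omega)]
    · rw [List.getElem_append_right (by simp [hlen]; omega)]
      have h4 : i - (List.replicate ((List.ofFn t).length - 2) Ctl.blank).length = 0 := by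
        rw [List.length_replicate, hlen]; omega
      rw [if_pos hc]
      simp [show i - (n - 2) = 0 from by omega]
    · rw [List.getElem_append_right (by simp [hlen]; omega)]
      have h4 : i - (List.replicate ((List.ofFn t).length - 2) Ctl.blank).length = 1 := by
        rw [List.length_replicate, hlen]; omega
      rw [if_neg (by omega)]
      simp [show i - (n - 2) = 1 from by omega]

lemma rotate_ofFn_one (n : ℕ) (hn : 3 ≤ n) (s : Fin n → α) :
    (List.ofFn s).rotate 1 =
      List.ofFn (fun i : Fin n => s ⟨(i.val + 1) % n, Nat.mod_lt _ (Nat.lt_of_lt_of_le (by norm_num) hn)⟩) := by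
  apply List.ext_getElem
  · simp
  · intro i h1 h2
    have hi : i < n := by simpa using h2
    rw [List.getElem_rotate, List.getElem_ofFn, List.getElem_ofFn]
    simp

end Stmt4Aux

open Stmt4 Stmt4Aux in
/-- Starting from `(s₁,blank)...(s_{n-2},blank)(s_{n-1},p)(sₙ,blank)` with `n ≥ 3`:
after `(n−1)²` iterations the string is `(s₂,blank)...(s_{n-1},blank)(sₙ,p)(s₁,blank)`,
and after `n(n−1)` iterations the string equals the initial string
(hence the system is periodic with period `n(n−1)`). -/
theorem stmt4 {α : Type*} (n : ℕ) (hn : 3 ≤ n) (s : Fin n → α) :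
    iterL rc ((n - 1) ^ 2)
      (List.ofFn fun i : Fin n => (s i, if i.val = n - 2 then Ctl.p else Ctl.blank)) =
      some (List.ofFn fun i : Fin n =>
        (s ⟨(i.val + 1) % n, Nat.mod_lt _ (by omega)⟩,
          if i.val = n - 2 then Ctl.p else Ctl.blank)) ∧
    iterL rc (n * (n - 1))
      (List.ofFn fun i : Fin n => (s i, if i.val = n - 2 then Ctl.p else Ctl.blank)) =
      some (List.ofFn fun i : Fin n =>
        (s i, if i.val = n - 2 then Ctl.p else Ctl.blank)) := by
  have hlen : (List.ofFn s).length = n := List.length_ofFn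
  have hF : 3 ≤ (List.ofFn s).length := by rw [hlen]; exact hn
  obtain ⟨m, hm⟩ : ∃ m, n = m + 3 := ⟨n - 3, by omega⟩
  constructor
  · have hc := cycles (n - 1) (List.ofFn s) hF
    rw [hlen] at hc
    rw [encF_ofFn n hn s, show (n - 1) ^ 2 = (n - 1) * (n - 1) from sq (n - 1), hc]
    congr 1
    have harg : (n - 1) * (n - 1) = 1 + (m + 1) * n := by
      subst hm; simp only [show m + 3 - 1 = m + 2 from rfl]; ring
    have hrot : (List.ofFn s).rotate ((n - 1) * (n - 1)) = (List.ofFn s).rotate 1 := by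
      rw [harg, ← List.rotate_mod, hlen, Nat.add_mul_mod_self_right,
        Nat.mod_eq_of_lt (by omega), ← List.rotate_mod, hlen,
        Nat.mod_eq_of_lt (by omega)]
    rw [hrot, rotate_ofFn_one n hn s, ← encF_ofFn n hn]
  · have hc := cycles n (List.ofFn s) hF
    rw [hlen] at hc
    rw [encF_ofFn n hn s, hc]
    congr 1
    have harg : n * (n - 1) = 0 + (n - 1) * n := by ring
    rw [harg, ← List.rotate_mod, hlen, Nat.add_mul_mod_self_right,
      Nat.zero_mod, List.rotate_zero, ← encF_ofFn n hn]
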